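/- Let k, l be positive integers with l < k < (a−1)l. Then p(m) > 0 for all m ∈ ℤ, p(m) < p(m+1) for all m ≥ 0, and p(m) > p(m+1) for all m ≤ −1; that is, the sequence satisfies ⋯ > p(−1) > p(0) = l < p(1) = k < p(2) < ⋯. -/
import Mathlib


/-- `pSeq a b k l p` says that `p : ℤ → ℤ` is the (unique) sequence with `p 0 = l`,
`p 1 = k`, and `p (m+2) = b * p (m+1) - p m` for even `m`,
`p (m+2) = a * p (m+1) - p m` for odd `m`. -/
def pSeq (a b k l : ℤ) (p : ℤ → ℤ) : Prop :=
  p 0 = l ∧ p 1 = k ∧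
    ∀ m : ℤ, p (m + 2) = (if Even m then b else a) * p (m + 1) - p m

lemma key_incr (q : ℤ → ℤ) (c : ℤ → ℤ) (hc : ∀ m : ℤ, 0 ≤ m → 2 ≤ c m)
    (hrec : ∀ m : ℤ, 0 ≤ m → q (m + 2) = c m * q (m + 1) - q m)
    (h0 : 0 < q 0) (h01 : q 0 < q 1) :
    ∀ n : ℕ, 0 < q n ∧ q n < q (n + 1) := by
  intro n
  induction n with
  | zero => simpa using ⟨h0, h01⟩
  | succ n ih =>
    obtain ⟨h1, h2⟩ := ih
    have h3 : q ((n : ℤ) + 2) = c n * q ((n : ℤ) + 1) - q n :=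
      hrec n (by positivity)
    have hcn : 2 ≤ c n := hc n (by positivity)
    have h4 : q ((n : ℤ) + 1) < q ((n : ℤ) + 2) := by nlinarith
    constructor
    · push_cast; linarith
    · have e : (n : ℤ) + 1 + 1 = (n : ℤ) + 2 := by ring
      push_cast
      rw [e]; linarith

theorem p_valley_case_i (a b k l : ℤ) (ha : 2 ≤ a) (hb : 2 ≤ b) (hab : 4 < a * b)
    (hl : 0 < l) (hlk : l < k) (hka : k < (a - 1) * l)
    (p : ℤ → ℤ) (hp : pSeq a b k l p) :
    (∀ m : ℤ, 0 < p m) ∧ (∀ m : ℤ, 0 ≤ m → p m < p (m + 1)) ∧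
      (∀ m : ℤ, m ≤ -1 → p (m + 1) < p m) := by
  obtain ⟨hp0, hp1, hrec⟩ := hp
  have hcpos : ∀ m : ℤ, 0 ≤ m → 2 ≤ (if Even m then b else a) := by
    intro m _; split <;> assumption
  have F : ∀ n : ℕ, 0 < p n ∧ p n < p (n + 1) := by
    refine key_incr p (fun m => if Even m then b else a) hcpos
      (fun m _ => hrec m) (by simpa [hp0]) (by simp [hp0, hp1, hlk])
  -- backward sequence
  set q : ℤ → ℤ := fun n => p (-n) with hq
  have hqrec : ∀ m : ℤ, 0 ≤ m → q (m + 2) = (if Even m then b else a) * q (m + 1) - q m := by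
    intro m _
    have h := hrec (-(m + 2))
    have heq : Even (-(m + 2)) ↔ Even m := by
      simp [even_neg, Int.even_add, Int.even_iff]
    simp only [hq]
    have e1 : -(m + 2) + 2 = -m := by ring
    have e2 : -(m + 2) + 1 = -(m + 1) := by ring
    rw [e1, e2] at h
    rw [if_congr heq rfl rfl] at h
    linarith [h]
  have hpneg1 : p (-1) = a * l - k := by
    have h := hrec (-1)
    have : ¬ Even (-1 : ℤ) := by decide
    simp [this, hp0] at h
    norm_num at h
    linarith [h, hp1]
  have G : ∀ n : ℕ, 0 < q n ∧ q n < q (n + 1) := by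
    refine key_incr q (fun m => if Even m then b else a) hcpos hqrec ?_ ?_
    · simpa [hq, hp0] using hl
    · have : q 1 = a * l - k := by simpa [hq] using hpneg1
      simp only [hq]
      norm_num [hpneg1, hp0]
      linarith
  refine ⟨?_, ?_, ?_⟩
  · intro m
    obtain ⟨n, rfl | rfl⟩ := Int.eq_nat_or_neg m
    · exact (F n).1
    · exact (G n).1
  · intro m hm
    lift m to ℕ using hm
    exact (F m).2
  · intro m hm
    obtain ⟨n, hn⟩ : ∃ n : ℕ, m = -((n : ℤ) + 1) := by
      refine ⟨(-m - 1).toNat, ?_⟩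
      have : ((-m - 1).toNat : ℤ) = -m - 1 := Int.toNat_of_nonneg (by omega)
      omega
    subst hn
    have := (G n).2
    simp only [hq] at this
    have e : -((n : ℤ) + 1) + 1 = -n := by ring
    rw [e]
    convert this using 2 <;> push_cast <;> ring
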